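/- arXiv:1109.3409 — 8 statements merged into one kernel-verified Lean document; each statement's English description precedes it below -/
import Mathlib

section
/- Let π : ℝ → ℝ be a probability density on ℝ that is symmetric (π(−θ) = π(θ) for all θ), continuously differentiable on (0,∞), nonincreasing on [0,∞), and satisfies π(t) → 0 and t·π(t) → 0 as t → ∞. Then for every θ ∈ ℝ with θ ≠ 0, π(θ) = ∫₀^∞ (1/(2t))·1{|θ| < t}·h(t) dt, where h(t) = −2t·π′(t). (Scale mixture of uniforms representation, Theorem 1.) -/
open MeasureTheory Set Filter

/-- Scale mixture of uniforms representation (Theorem 1): a symmetric, unimodal,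
continuously differentiable density `π` may be written as a scale mixture of uniform
distributions with mixing density `h t = -2 t π'(t)`. -/
theorem scale_mixture_of_uniforms
    (π : ℝ → ℝ)
    (hnonneg : ∀ x, 0 ≤ π x)
    (hint : Integrable π)
    (hnorm : (∫ x, π x) = 1)
    (hsymm : ∀ x, π (-x) = π x)
    (hC1 : ContDiffOn ℝ 1 π (Ioi 0))
    (hmono : AntitoneOn π (Ici 0))
    (hlim : Tendsto π atTop (nhds 0))
    (hlim' : Tendsto (fun t => t * π t) atTop (nhds 0))
    (θ : ℝ) (hθ : θ ≠ 0) :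
    π θ = ∫ t in Ioi (0 : ℝ),
      (1 / (2 * t)) * (if |θ| < t then (1 : ℝ) else 0) * (-2 * t * deriv π t) := by
  set a : ℝ := |θ| with ha_def
  have ha : 0 < a := abs_pos.mpr hθ
  -- differentiability on Ioi 0
  have hdiffAt : ∀ t ∈ Ioi (0 : ℝ), DifferentiableAt ℝ π t := by
    intro t ht
    exact (hC1.differentiableOn one_ne_zero).differentiableAt (isOpen_Ioi.mem_nhds ht)
  have hderiv : ∀ t ∈ Ioi a, HasDerivAt π (deriv π t) t := by
    intro t ht
    exact (hdiffAt t (lt_trans ha ht)).hasDerivAt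
  -- derivative is nonpositive on Ioi 0
  have hderiv_nonpos : ∀ t ∈ Ioi (0 : ℝ), deriv π t ≤ 0 := by
    intro t ht
    have h1 : Tendsto (slope π t) (nhdsWithin t {t}ᶜ) (nhds (deriv π t)) :=
      hasDerivAt_iff_tendsto_slope.mp (hdiffAt t ht).hasDerivAt
    have h2 : Tendsto (slope π t) (nhdsWithin t (Ioi t)) (nhds (deriv π t)) :=
      h1.mono_left (nhdsWithin_mono t fun y hy => ne_of_gt hy)
    refine le_of_tendsto h2 ?_
    filter_upwards [self_mem_nhdsWithin] with y hy
    have hy' : t < y := hy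
    have hπ : π y ≤ π t := hmono (mem_Ici.mpr (le_of_lt (mem_Ioi.mp ht))) (mem_Ici.mpr (le_of_lt (lt_trans (mem_Ioi.mp ht) hy'))) (le_of_lt hy')
    rw [slope_def_field]
    exact div_nonpos_of_nonpos_of_nonneg (by linarith) (by linarith)
  -- continuity at a within Ici a
  have hcont : ContinuousWithinAt π (Ici a) a :=
    (hdiffAt a ha).continuousAt.continuousWithinAt
  -- integrability of deriv π on Ioi a
  have hintg : IntegrableOn (fun t => deriv π t) (Ioi a) := by
    have := integrableOn_Ioi_deriv_of_nonpos hcont hderiv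
      (fun t ht => hderiv_nonpos t (lt_trans ha ht)) hlim
    exact this
  -- FTC on [a, ∞)
  have hFTC : (∫ t in Ioi a, deriv π t) = 0 - π a :=
    integral_Ioi_of_hasDerivAt_of_tendsto hcont hderiv hintg hlim
  -- rewrite the integrand on Ioi 0
  have hcongr : ∫ t in Ioi (0 : ℝ),
        (1 / (2 * t)) * (if |θ| < t then (1 : ℝ) else 0) * (-2 * t * deriv π t)
      = ∫ t in Ioi (0 : ℝ), (Ioi a).indicator (fun t => -deriv π t) t := by
    refine setIntegral_congr_fun measurableSet_Ioi ?_
    intro t ht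
    have ht0 : (t : ℝ) ≠ 0 := ne_of_gt ht
    by_cases h : a < t
    · simp only [indicator_of_mem (mem_Ioi.mpr h), if_pos (show |θ| < t from h)]
      field_simp
    · simp [indicator_of_notMem (fun hh => h (mem_Ioi.mp hh)), if_neg (show ¬ |θ| < t from h)]
  have hsub : Ioi a ⊆ Ioi (0 : ℝ) := fun x hx => lt_trans ha hx
  have hres : ∫ t in Ioi (0 : ℝ), (Ioi a).indicator (fun t => -deriv π t) t
      = ∫ t in Ioi a, -deriv π t := by
    rw [setIntegral_indicator measurableSet_Ioi]
    congr 1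
    rw [inter_eq_right.mpr hsub]
  have hval : (∫ t in Ioi a, -deriv π t) = π a := by
    rw [integral_neg, hFTC]; ring
  have hπa : π θ = π a := by
    rcases lt_or_gt_of_ne hθ with h | h
    · rw [ha_def, abs_of_neg h, ← hsymm θ]
    · rw [ha_def, abs_of_pos h]
  rw [hπa, hcongr, hres, hval]
end

section
/- For every σ > 0, μ ∈ ℝ and x ∈ ℝ, the Gaussian density satisfies (1/(σ√(2π)))·exp(−(x−μ)²/(2σ²)) = ∫₀^∞ (1/(2σ√v))·1{|x−μ| < σ√v}·g(v) dv, where g(v) = v^{1/2}·e^{−v/2}/(2^{3/2}·Γ(3/2)) is the Gamma(3/2, 1/2) density (shape 3/2, rate 1/2). That is, a N(μ,σ²) random variable can be expressed as x | v ∼ Uniform(μ − σ√v, μ + σ√v) with v ∼ Gamma(3/2, 1/2). -/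
open MeasureTheory Set

lemma exp_half_integral (c : ℝ) :
    ∫ v in Ioi c, Real.exp (-v / 2) = 2 * Real.exp (-c / 2) := by
  have h : ∀ v ∈ Ici c, HasDerivAt (fun v : ℝ => -2 * Real.exp (-v / 2))
      (Real.exp (-v / 2)) v := by
    intro v _
    have : HasDerivAt (fun v : ℝ => -v / 2) (-(1/2)) v := by
      have h0 : HasDerivAt (fun v : ℝ => -v / 2) (-1 / 2) v := ((hasDerivAt_id v).neg.div_const 2)
      convert h0 using 1
      norm_num
    have : HasDerivAt (fun v : ℝ => -2 * Real.exp (-v / 2)) (-2 * (Real.exp (-v / 2) * -(1/2))) v :=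
      (this.exp).const_mul (-2 : ℝ)
    convert this using 1
    ring
  have hint : IntegrableOn (fun v => Real.exp (-v / 2)) (Ioi c) := by
    have := exp_neg_integrableOn_Ioi c (b := 1/2) (by norm_num)
    refine this.congr_fun (fun x _ => ?_) measurableSet_Ioi
    ring_nf
  have htend : Filter.Tendsto (fun v : ℝ => -2 * Real.exp (-v / 2)) Filter.atTop (nhds 0) := by
    have : Filter.Tendsto (fun v : ℝ => -v / 2) Filter.atTop Filter.atBot := by
      apply Filter.Tendsto.atBot_div_const (by norm_num)
      exact Filter.tendsto_neg_atBot_iff.mpr Filter.tendsto_id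
    have := (Real.tendsto_exp_atBot.comp this).const_mul (-2 : ℝ)
    simpa using this
  have := MeasureTheory.integral_Ioi_of_hasDerivAt_of_tendsto' h hint htend
  rw [this]; ring

/-- A Gaussian density is a scale mixture of uniforms: `x ∼ N(μ, σ²)` may be written
as `x | v ∼ Uniform(μ - σ√v, μ + σ√v)` with `v ∼ Gamma(3/2, 1/2)`. -/
theorem gaussian_scale_mixture_of_uniforms (σ μ x : ℝ) (hσ : 0 < σ) :
    (1 / (σ * Real.sqrt (2 * Real.pi))) * Real.exp (-(x - μ) ^ 2 / (2 * σ ^ 2)) =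
      ∫ v in Ioi (0 : ℝ),
        (1 / (2 * σ * Real.sqrt v)) *
          (if |x - μ| < σ * Real.sqrt v then (1 : ℝ) else 0) *
          (Real.sqrt v * Real.exp (-v / 2) /
            ((2 : ℝ) ^ ((3 : ℝ) / 2) * Real.Gamma (3 / 2))) := by
  set c : ℝ := (x - μ) ^ 2 / σ ^ 2 with hc
  have hc0 : 0 ≤ c := div_nonneg (sq_nonneg _) (sq_nonneg _)
  have hΓ : (2 : ℝ) ^ ((3 : ℝ) / 2) * Real.Gamma (3 / 2) = Real.sqrt (2 * Real.pi) := by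
    have h1 : Real.Gamma (3 / 2) = (1 / 2) * Real.Gamma (1 / 2) := by
      have := Real.Gamma_add_one (s := (1 / 2 : ℝ)) (by norm_num)
      norm_num at this ⊢
      linarith [this]
    have h2 : (2 : ℝ) ^ ((3 : ℝ) / 2) = 2 * Real.sqrt 2 := by
      rw [show (3 : ℝ) / 2 = 1 + 1 / 2 by norm_num, Real.rpow_add (by norm_num),
        Real.rpow_one, ← Real.sqrt_eq_rpow]
    rw [h1, h2, Real.Gamma_one_half_eq, Real.sqrt_mul (by norm_num)]
    ring
  have key : ∀ v ∈ Ioi (0 : ℝ),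
      (1 / (2 * σ * Real.sqrt v)) *
          (if |x - μ| < σ * Real.sqrt v then (1 : ℝ) else 0) *
          (Real.sqrt v * Real.exp (-v / 2) /
            ((2 : ℝ) ^ ((3 : ℝ) / 2) * Real.Gamma (3 / 2))) =
        (Ioi c).indicator
          (fun v => Real.exp (-v / 2) / (2 * σ * Real.sqrt (2 * Real.pi))) v := by
    intro v hv
    have hv0 : 0 < v := hv
    have hsv : 0 < Real.sqrt v := Real.sqrt_pos.mpr hv0
    have hiff : |x - μ| < σ * Real.sqrt v ↔ c < v := by
      rw [show σ * Real.sqrt v = Real.sqrt v * σ by ring, ← div_lt_iff₀ hσ]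
      rw [show (c : ℝ) = (|x - μ| / σ) ^ 2 by
        rw [div_pow, sq_abs]]
      constructor
      · intro h
        have h0 : 0 ≤ |x - μ| / σ := div_nonneg (abs_nonneg _) hσ.le
        calc (|x - μ| / σ) ^ 2 < Real.sqrt v ^ 2 := by
              exact pow_lt_pow_left₀ h h0 (by norm_num)
          _ = v := Real.sq_sqrt hv0.le
      · intro h
        exact Real.lt_sqrt_of_sq_lt h
    rw [hΓ]
    by_cases h : c < v
    · have hm : v ∈ Ioi c := h
      rw [indicator_of_mem hm, if_pos (hiff.mpr h)]
      field_simp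
    · have hm : v ∉ Ioi c := h
      rw [indicator_of_notMem hm, if_neg (fun hh => h (hiff.mp hh))]
      ring
  rw [setIntegral_congr_fun measurableSet_Ioi key]
  rw [setIntegral_indicator measurableSet_Ioi, Ioi_inter_Ioi, max_eq_right hc0]
  rw [integral_div, exp_half_integral]
  rw [eq_div_iff (by positivity)]
  rw [hc]
  rw [show -((x - μ) ^ 2 / σ ^ 2) / 2 = -(x - μ) ^ 2 / (2 * σ ^ 2) by ring]
  field_simp
end

section
/- For any probability measure μ on (0,∞), the Gaussian scale mixture density π(θ) = ∫₀^∞ (1/(σ√(2π)))·exp(−θ²/(2σ²)) dμ(σ) admits a scale mixture of uniforms representation: π(θ) = ∫₀^∞ (1/(2t))·1{|θ| < t} dν(t) for all θ ∈ ℝ, where ν is the law of the product σ·√V with σ distributed according to μ and V an independent Gamma(3/2, 1/2) random variable (shape 3/2, rate 1/2). In particular, every scale mixture of Gaussians is a scale mixture of uniforms. -/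
set_option maxHeartbeats 800000


open MeasureTheory ProbabilityTheory Set

lemma const_eq : (1/2 : ℝ) ^ (3/2 : ℝ) / Real.Gamma (3/2) = 1 / Real.sqrt (2 * Real.pi) := by
  have hΓ : Real.Gamma (3/2) = Real.sqrt Real.pi / 2 := by
    rw [show (3/2 : ℝ) = 1/2 + 1 by norm_num, Real.Gamma_add_one (by norm_num),
      Real.Gamma_one_half_eq]
    ring
  have h1 : (1/2 : ℝ) ^ (3/2 : ℝ) = (1/2) * Real.sqrt (1/2) := by
    rw [show (3/2 : ℝ) = 1 + 1/2 by norm_num, Real.rpow_add (by norm_num), Real.rpow_one,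
      ← Real.sqrt_eq_rpow]
  have h2 : Real.sqrt (1/2) = (Real.sqrt 2)⁻¹ := by
    rw [one_div, Real.sqrt_inv]
  have h3 : Real.sqrt (2 * Real.pi) = Real.sqrt 2 * Real.sqrt Real.pi :=
    Real.sqrt_mul (by norm_num) _
  have h4 : Real.sqrt 2 * Real.sqrt 2 = 2 := Real.mul_self_sqrt (by norm_num)
  have hs2 : (0:ℝ) < Real.sqrt 2 := Real.sqrt_pos.mpr (by norm_num)
  have hsp : (0:ℝ) < Real.sqrt Real.pi := Real.sqrt_pos.mpr Real.pi_pos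
  rw [h1, h2, hΓ, h3]
  field_simp

lemma inner_eq (σ θ : ℝ) (hσ : 0 < σ) :
    ∫⁻ v, ENNReal.ofReal ((1 / (2 * (σ * Real.sqrt v))) *
        (if |θ| < σ * Real.sqrt v then (1:ℝ) else 0)) ∂(gammaMeasure (3/2) (1/2)) =
      ENNReal.ofReal ((1 / (σ * Real.sqrt (2 * Real.pi))) * Real.exp (-θ ^ 2 / (2 * σ ^ 2))) := by
  set c : ℝ := θ ^ 2 / σ ^ 2 with hc
  have hc0 : 0 ≤ c := by positivity
  set C : ℝ := (1/2 : ℝ) ^ (3/2 : ℝ) / Real.Gamma (3/2) / (2 * σ) with hC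
  have hpdf : ∀ v : ℝ, gammaPDFReal (3/2) (1/2) v *
      ((1 / (2 * (σ * Real.sqrt v))) * (if |θ| < σ * Real.sqrt v then (1:ℝ) else 0)) =
      (Ioi c).indicator (fun v => C * Real.exp (-(v/2))) v := by
    intro v
    rcases lt_trichotomy v 0 with hv | hv | hv
    · rw [gammaPDFReal, if_neg (not_le.mpr hv), zero_mul,
        indicator_of_notMem (by simp only [mem_Ioi, not_lt]; linarith)]
    · subst hv
      rw [Real.sqrt_zero, mul_zero, if_neg (by simp [abs_nonneg]),
        indicator_of_notMem (by simp only [mem_Ioi, not_lt]; exact hc0)]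
      ring
    · have hsv : 0 < Real.sqrt v := Real.sqrt_pos.mpr hv
      have hcond : (|θ| < σ * Real.sqrt v) ↔ c < v := by
        rw [mul_comm, ← div_lt_iff₀ hσ, hc]
        rw [Real.lt_sqrt (by positivity)]
        rw [div_pow, sq_abs]
      rw [gammaPDFReal, if_pos hv.le]
      by_cases hmem : c < v
      · rw [if_pos (hcond.mpr hmem), Set.indicator_of_mem (show v ∈ Ioi c from hmem)]
        have hrp : v ^ (3/2 - 1 : ℝ) = Real.sqrt v := by
          rw [show (3/2 - 1 : ℝ) = 1/2 by norm_num, ← Real.sqrt_eq_rpow]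
        rw [hrp, hC]
        have : -(1/2 * v) = -(v/2) := by ring
        rw [this]
        field_simp
      · rw [if_neg (fun h => hmem (hcond.mp h)), Set.indicator_of_notMem (show v ∉ Ioi c from hmem)]
        ring
  have hmeas : Measurable fun v : ℝ => ENNReal.ofReal ((1 / (2 * (σ * Real.sqrt v))) *
      (if |θ| < σ * Real.sqrt v then (1:ℝ) else 0)) := by
    have hs : Measurable fun v : ℝ => σ * Real.sqrt v :=
      measurable_const.mul Real.continuous_sqrt.measurable
    apply Measurable.ennreal_ofReal
    exact (measurable_const.div (measurable_const.mul hs)).mul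
      (Measurable.ite (measurableSet_lt measurable_const hs) measurable_const measurable_const)
  have hpdfmeas : Measurable (gammaPDF (3/2) (1/2)) :=
    (measurable_gammaPDFReal _ _).ennreal_ofReal
  rw [gammaMeasure, lintegral_withDensity_eq_lintegral_mul _ hpdfmeas hmeas]
  have step : ∀ v : ℝ, (gammaPDF (3/2) (1/2) * fun v => ENNReal.ofReal
      ((1 / (2 * (σ * Real.sqrt v))) * (if |θ| < σ * Real.sqrt v then (1:ℝ) else 0))) v =
      ENNReal.ofReal ((Ioi c).indicator (fun v => C * Real.exp (-(v/2))) v) := by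
    intro v
    rw [Pi.mul_apply, show gammaPDF (3/2) (1/2) v = ENNReal.ofReal (gammaPDFReal (3/2) (1/2) v)
      from rfl, ← ENNReal.ofReal_mul (gammaPDFReal_nonneg (by norm_num) (by norm_num) v), hpdf v]
  simp only [step]
  have hint : Integrable ((Ioi c).indicator (fun v => C * Real.exp (-(v/2)))) := by
    rw [integrable_indicator_iff measurableSet_Ioi]
    have hfun : (fun v : ℝ => C * Real.exp (-(v/2))) = fun v => C * Real.exp (-(1/2) * v) := by
      funext v; congr 1; ring
    rw [hfun]
    exact (exp_neg_integrableOn_Ioi c (by norm_num : (0:ℝ) < 1/2)).const_mul C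
  rw [← MeasureTheory.ofReal_integral_eq_lintegral_ofReal hint (ae_of_all _ fun v => by
      simp only [Pi.zero_apply]
      rcases le_or_gt v c with h | h
      · rw [Set.indicator_of_notMem (by simpa using not_lt.mpr h)]
      · rw [Set.indicator_of_mem (show v ∈ Ioi c from h)]
        have : 0 < C := by rw [hC, const_eq]; positivity
        positivity)]
  congr 1
  rw [integral_indicator measurableSet_Ioi, integral_const_mul]
  have hsub : (∫ v in Ioi c, Real.exp (-(v/2))) = 2 * Real.exp (-(c/2)) := by
    have heq : (fun v : ℝ => Real.exp (-(v/2))) = fun v => Real.exp (-(1/2 * v)) := by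
      funext v; congr 1; ring
    rw [heq]
    have := integral_comp_mul_left_Ioi (fun u => Real.exp (-u)) c
      (by norm_num : (0:ℝ) < 1/2)
    simp only [smul_eq_mul] at this
    rw [this, integral_exp_neg_Ioi, show -(1/2*c) = -(c/2) by ring]
    norm_num
  rw [hsub, hC, const_eq]
  rw [show -(c/2) = -θ^2/(2*σ^2) from by rw [hc]; field_simp]
  have hsq : Real.sqrt (2*Real.pi) ≠ 0 := by positivity
  field_simp

/-- Every scale mixture of Gaussians is a scale mixture of uniforms: if `μ` is a
probability measure on `(0, ∞)` (mixing over the Gaussian scale `σ`), then the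
Gaussian scale mixture density equals the uniform scale mixture with mixing measure
`ν`, the law of `σ·√V` where `σ ∼ μ` and `V ∼ Gamma(3/2, 1/2)` independently. -/
theorem gaussian_scale_mixture_is_uniform_scale_mixture
    (μ : Measure ℝ) [IsProbabilityMeasure μ] (hsupp : μ (Iic 0) = 0) :
    ∀ θ : ℝ,
      (∫ σ, (1 / (σ * Real.sqrt (2 * Real.pi))) * Real.exp (-θ ^ 2 / (2 * σ ^ 2)) ∂μ) =
        ∫ t, (1 / (2 * t)) * (if |θ| < t then (1 : ℝ) else 0)
          ∂(Measure.map (fun p : ℝ × ℝ => p.1 * Real.sqrt p.2)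
              (μ.prod (gammaMeasure (3 / 2) (1 / 2)))) := by
  intro θ
  have hgamma : IsProbabilityMeasure (gammaMeasure (3/2) (1/2)) :=
    isProbabilityMeasure_gammaMeasure (by norm_num) (by norm_num)
  have hae : ∀ᵐ σ ∂μ, 0 < σ := by
    rw [ae_iff]
    convert hsupp using 2
    ext σ; simp [not_lt]
  -- measurability facts
  have hT : Measurable (fun p : ℝ × ℝ => p.1 * Real.sqrt p.2) :=
    measurable_fst.mul (Real.continuous_sqrt.measurable.comp measurable_snd)
  have hfmeas : Measurable (fun t : ℝ => (1 / (2 * t)) * (if |θ| < t then (1:ℝ) else 0)) := by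
    exact (measurable_const.div (measurable_const.mul measurable_id)).mul
      (Measurable.ite (measurableSet_lt measurable_const measurable_id)
        measurable_const measurable_const)
  have hfnn : ∀ t : ℝ, 0 ≤ (1 / (2 * t)) * (if |θ| < t then (1:ℝ) else 0) := by
    intro t
    by_cases h : |θ| < t
    · have ht : 0 < t := lt_of_le_of_lt (abs_nonneg θ) h
      rw [if_pos h]; positivity
    · rw [if_neg h, mul_zero]
  have hgmeas : Measurable (fun σ : ℝ =>
      (1 / (σ * Real.sqrt (2 * Real.pi))) * Real.exp (-θ ^ 2 / (2 * σ ^ 2))) := by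
    exact (measurable_const.div (measurable_id.mul measurable_const)).mul
      ((measurable_const.div ((measurable_id.pow_const 2).const_mul 2)).exp)
  have hgnn : ∀ᵐ σ ∂μ, 0 ≤ (1 / (σ * Real.sqrt (2 * Real.pi))) * Real.exp (-θ ^ 2 / (2 * σ ^ 2)) := by
    filter_upwards [hae] with σ hσ
    positivity
  -- rewrite RHS
  rw [integral_map hT.aemeasurable hfmeas.aestronglyMeasurable]
  rw [integral_eq_lintegral_of_nonneg_ae (ae_of_all _ fun p => hfnn _)
    ((hfmeas.comp hT).aestronglyMeasurable)]
  have hmeas2 : Measurable (fun p : ℝ × ℝ => ENNReal.ofReal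
      ((1 / (2 * (p.1 * Real.sqrt p.2))) * (if |θ| < p.1 * Real.sqrt p.2 then (1:ℝ) else 0))) :=
    (hfmeas.comp hT).ennreal_ofReal
  rw [MeasureTheory.lintegral_prod _ hmeas2.aemeasurable]
  rw [integral_eq_lintegral_of_nonneg_ae hgnn hgmeas.aestronglyMeasurable]
  congr 1
  apply lintegral_congr_ae
  filter_upwards [hae] with σ hσ
  exact (inner_eq σ θ hσ).symm
end

section
/- For every q > 0, τ > 0 and θ ∈ ℝ with θ ≠ 0, the unnormalized exponential power density satisfies exp(−|θ|^q/τ^q) = ∫₀^∞ (1/(2t))·1{|θ| < t}·(2q·t^q/τ^q)·exp(−t^q/τ^q) dt. That is, the mixing density of the exponential power prior in its scale mixture of uniforms representation is proportional to t^q·exp(−t^q/τ^q) on (0,∞) (a generalized gamma density). -/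
open MeasureTheory Set Filter

private lemma epsm_pointwise {q τ t : ℝ} (hτq : τ ^ q ≠ 0) (ht0 : 0 < t) :
    (1 / (2 * t)) * (1 : ℝ) * ((2 * q * t ^ q / τ ^ q) * Real.exp (-(t ^ q) / τ ^ q)) =
      q * t ^ (q - 1) / τ ^ q * Real.exp (-(t ^ q) / τ ^ q) := by
  have hrw : t ^ (q - 1) = t ^ q / t := Real.rpow_sub_one ht0.ne' q
  rw [hrw]
  field_simp

/-- The (unnormalized) exponential power density `exp(-|θ|^q/τ^q)` is a scale mixture
of uniforms with mixing density proportional to `t^q exp(-t^q/τ^q)` on `(0, ∞)`. -/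
theorem exponential_power_scale_mixture_of_uniforms
    (q τ θ : ℝ) (hq : 0 < q) (hτ : 0 < τ) (hθ : θ ≠ 0) :
    Real.exp (-(|θ| ^ q) / τ ^ q) =
      ∫ t in Ioi (0 : ℝ),
        (1 / (2 * t)) * (if |θ| < t then (1 : ℝ) else 0) *
          ((2 * q * t ^ q / τ ^ q) * Real.exp (-(t ^ q) / τ ^ q)) := by
  have ha : 0 < |θ| := abs_pos.2 hθ
  have hτq : 0 < τ ^ q := Real.rpow_pos_of_pos hτ q
  have hderiv : ∀ x ∈ Ici |θ|, HasDerivAt (fun t => -Real.exp (-(t ^ q) / τ ^ q))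
      (q * x ^ (q - 1) / τ ^ q * Real.exp (-(x ^ q) / τ ^ q)) x := by
    intro x hx
    have hx0 : (0:ℝ) < x := lt_of_lt_of_le ha hx
    have h1 : HasDerivAt (fun t : ℝ => t ^ q) (q * x ^ (q - 1)) x := by
      simpa [mul_comm] using Real.hasDerivAt_rpow_const (p := q) (Or.inl hx0.ne')
    have h2 : HasDerivAt (fun t : ℝ => -(t ^ q) / τ ^ q)
        (-(q * x ^ (q - 1)) / τ ^ q) x := (h1.neg).div_const _
    have h3 : HasDerivAt (fun t => -Real.exp (-(t ^ q) / τ ^ q))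
        (-(Real.exp (-(x ^ q) / τ ^ q) * (-(q * x ^ (q - 1)) / τ ^ q))) x := (h2.exp).neg
    convert h3 using 1
    ring
  have hpos : ∀ x ∈ Ioi |θ|,
      0 ≤ q * x ^ (q - 1) / τ ^ q * Real.exp (-(x ^ q) / τ ^ q) := by
    intro x hx
    have hx0 : (0:ℝ) < x := lt_trans ha hx
    have h1 : (0:ℝ) ≤ x ^ (q - 1) := (Real.rpow_pos_of_pos hx0 _).le
    positivity
  have htend : Tendsto (fun t : ℝ => -Real.exp (-(t ^ q) / τ ^ q)) atTop (nhds 0) := by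
    have h1 : Tendsto (fun t : ℝ => t ^ q) atTop atTop := tendsto_rpow_atTop hq
    have h2 : Tendsto (fun t : ℝ => -(t ^ q) / τ ^ q) atTop atBot := by
      have := tendsto_neg_atTop_atBot.comp (h1.atTop_div_const hτq)
      simpa [Function.comp_def, neg_div] using this
    have h3 := Real.tendsto_exp_atBot.comp h2
    simpa [Function.comp_def] using h3.neg
  have key : (∫ x in Ioi |θ|, q * x ^ (q - 1) / τ ^ q * Real.exp (-(x ^ q) / τ ^ q))
      = 0 - -Real.exp (-(|θ| ^ q) / τ ^ q) :=
    integral_Ioi_of_hasDerivAt_of_nonneg' hderiv hpos htend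
  have step1 : ∫ t in Ioi (0 : ℝ),
        (1 / (2 * t)) * (if |θ| < t then (1 : ℝ) else 0) *
          ((2 * q * t ^ q / τ ^ q) * Real.exp (-(t ^ q) / τ ^ q))
      = ∫ t in Ioi (0 : ℝ), (Ioi |θ|).indicator
          (fun x => q * x ^ (q - 1) / τ ^ q * Real.exp (-(x ^ q) / τ ^ q)) t := by
    apply setIntegral_congr_fun measurableSet_Ioi
    intro t ht
    beta_reduce
    by_cases h : |θ| < t
    · rw [if_pos h, indicator_of_mem (mem_Ioi.2 h)]
      exact epsm_pointwise hτq.ne' ht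
    · rw [if_neg h, indicator_of_notMem (by simpa using h), mul_zero, zero_mul]
  rw [step1, setIntegral_indicator measurableSet_Ioi, Ioi_inter_Ioi,
    max_eq_right ha.le, key]
  ring
end

section
/- For every ν > 0, τ > 0 and θ ∈ ℝ with θ ≠ 0, the unnormalized Student-t density satisfies (1 + θ²/τ²)^{−(ν+1)/2} = ∫₀^∞ (1/(2t))·1{|θ| < t}·((ν+1)·2t²/τ²)·(1 + t²/τ²)^{−(ν+3)/2} dt. That is, the mixing density of the Student-t prior in its scale mixture of uniforms representation is proportional to t²·(1 + t²/τ²)^{−(ν+3)/2} on (0,∞). -/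
open MeasureTheory Set Filter Topology

/-- The (unnormalized) Student-t density `(1 + θ²/τ²)^{-(ν+1)/2}` is a scale mixture
of uniforms with mixing density proportional to `t²(1 + t²/τ²)^{-(ν+3)/2}` on `(0, ∞)`. -/
theorem student_t_scale_mixture_of_uniforms
    (ν τ θ : ℝ) (hν : 0 < ν) (hτ : 0 < τ) (hθ : θ ≠ 0) :
    (1 + θ ^ 2 / τ ^ 2) ^ (-(ν + 1) / 2) =
      ∫ t in Ioi (0 : ℝ),
        (1 / (2 * t)) * (if |θ| < t then (1 : ℝ) else 0) *
          ((ν + 1) * 2 * t ^ 2 / τ ^ 2 * (1 + t ^ 2 / τ ^ 2) ^ (-(ν + 3) / 2)) := by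
  have ha : 0 < |θ| := abs_pos.mpr hθ
  have hτ2 : (0:ℝ) < τ ^ 2 := by positivity
  set a := |θ| with ha_def
  set h : ℝ → ℝ := fun t => (ν + 1) * t / τ ^ 2 * (1 + t ^ 2 / τ ^ 2) ^ (-(ν + 3) / 2) with hh
  have hu : ∀ t : ℝ, (0:ℝ) < 1 + t ^ 2 / τ ^ 2 := fun t => by positivity
  -- Step 1: rewrite the integral as an integral over Ioi a
  have step1 : (∫ t in Ioi (0 : ℝ),
        (1 / (2 * t)) * (if a < t then (1 : ℝ) else 0) *
          ((ν + 1) * 2 * t ^ 2 / τ ^ 2 * (1 + t ^ 2 / τ ^ 2) ^ (-(ν + 3) / 2)))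
      = ∫ t in Ioi a, h t := by
    have : EqOn (fun t : ℝ =>
        (1 / (2 * t)) * (if a < t then (1 : ℝ) else 0) *
          ((ν + 1) * 2 * t ^ 2 / τ ^ 2 * (1 + t ^ 2 / τ ^ 2) ^ (-(ν + 3) / 2)))
        ((Ioi a).indicator h) (Ioi (0:ℝ)) := by
      intro t ht
      simp only [indicator, mem_Ioi]
      by_cases hat : a < t
      · have ht0 : (t:ℝ) ≠ 0 := ne_of_gt ht
        simp only [hat, if_true, hh]
        field_simp
      · simp [hat]
    rw [setIntegral_congr_fun measurableSet_Ioi this,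
      setIntegral_indicator measurableSet_Ioi]
    congr 1
    rw [Set.Ioi_inter_Ioi]
    simp [max_eq_right ha.le]
  rw [step1]
  -- Step 2: FTC on (a, ∞) with antiderivative -(1+t²/τ²)^{-(ν+1)/2}
  set g : ℝ → ℝ := fun t => -(1 + t ^ 2 / τ ^ 2) ^ (-(ν + 1) / 2) with hg
  have hderiv : ∀ t ∈ Ici a, HasDerivAt g (h t) t := by
    intro t ht
    have hut : HasDerivAt (fun t : ℝ => 1 + t ^ 2 / τ ^ 2) (2 * t / τ ^ 2) t := by
      have : HasDerivAt (fun t : ℝ => t ^ 2) (2 * t) t := by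
        simpa using hasDerivAt_pow 2 t
      simpa [add_comm] using (this.div_const (τ ^ 2)).const_add 1
    have := (hut.rpow_const (p := -(ν + 1) / 2) (Or.inl (ne_of_gt (hu t)))).neg
    convert this using 1
    case e'_4 => exact rfl
    case e'_5 => exact rfl
    case e'_8 => exact rfl
    have hexp : -(ν + 1) / 2 - 1 = -(ν + 3) / 2 := by ring
    rw [hh]
    simp only [← hexp]
    ring
  have hpos : ∀ t ∈ Ioi a, 0 ≤ h t := by
    intro t ht
    have ht0 : 0 < t := lt_trans ha ht
    have := hu t
    rw [hh]
    positivity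
  have htend : Tendsto g atTop (𝓝 0) := by
    rw [hg]
    rw [show (0:ℝ) = -0 by norm_num]
    apply Tendsto.neg
    have hbase : Tendsto (fun t : ℝ => 1 + t ^ 2 / τ ^ 2) atTop atTop := by
      apply tendsto_atTop_add_const_left
      exact (tendsto_pow_atTop (by norm_num)).atTop_div_const hτ2
    have hrpow : Tendsto (fun x : ℝ => x ^ (-(ν + 1) / 2)) atTop (𝓝 0) := by
      rw [neg_div]
      exact tendsto_rpow_neg_atTop (by linarith)
    exact hrpow.comp hbase
  rw [integral_Ioi_of_hasDerivAt_of_nonneg' hderiv hpos htend, hg]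
  have haθ : a ^ 2 = θ ^ 2 := by rw [ha_def, sq_abs]
  simp [haθ]
end

section
/- For every α > 0, τ > 0 and θ ∈ ℝ with θ ≠ 0, the unnormalized generalized double Pareto density satisfies (1 + |θ|/τ)^{−(1+α)} = ∫₀^∞ (1/(2t))·1{|θ| < t}·(2t·(1+α)/τ)·(1 + t/τ)^{−(2+α)} dt. That is, the mixing density of the generalized double Pareto prior in its scale mixture of uniforms representation is proportional to t·(1 + t/τ)^{−(2+α)} on (0,∞). -/
open MeasureTheory Set Filter Topology

/-- The (unnormalized) generalized double Pareto density `(1 + |θ|/τ)^{-(1+α)}` is a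
scale mixture of uniforms with mixing density proportional to `t(1 + t/τ)^{-(2+α)}`
on `(0, ∞)`. -/
theorem gdp_scale_mixture_of_uniforms
    (α τ θ : ℝ) (hα : 0 < α) (hτ : 0 < τ) (hθ : θ ≠ 0) :
    (1 + |θ| / τ) ^ (-(1 + α)) =
      ∫ t in Ioi (0 : ℝ),
        (1 / (2 * t)) * (if |θ| < t then (1 : ℝ) else 0) *
          ((2 * t * (1 + α) / τ) * (1 + t / τ) ^ (-(2 + α))) := by
  have hθ' : 0 < |θ| := abs_pos.mpr hθ
  have key : ∀ t ∈ Ioi (0:ℝ),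
      (1 / (2 * t)) * (if |θ| < t then (1 : ℝ) else 0) *
          ((2 * t * (1 + α) / τ) * (1 + t / τ) ^ (-(2 + α)))
        = (Ioi |θ|).indicator (fun t => (1+α)/τ * (1 + t / τ) ^ (-(2 + α))) t := by
    intro t ht
    simp only [mem_Ioi] at ht
    by_cases h : |θ| < t
    · rw [indicator_of_mem (mem_Ioi.mpr h), if_pos h]
      field_simp
    · rw [indicator_of_notMem (by simpa using h), if_neg h]
      ring
  rw [setIntegral_congr_fun measurableSet_Ioi key,
    setIntegral_indicator measurableSet_Ioi,
    inter_eq_self_of_subset_right (Ioi_subset_Ioi hθ'.le)]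
  set F : ℝ → ℝ := fun t => -((1 + t / τ) ^ (-(1 + α))) with hF
  have hd : ∀ x ∈ Ici |θ|, HasDerivAt F ((1+α)/τ * (1 + x / τ) ^ (-(2 + α))) x := by
    intro x hx
    have hxpos : 0 < x := lt_of_lt_of_le hθ' hx
    have hbase : (0:ℝ) < 1 + x / τ := by positivity
    have h1 : HasDerivAt (fun t : ℝ => 1 + t / τ) (1 / τ) x := by
      simpa using ((hasDerivAt_id x).div_const τ).const_add 1
    have h2 := (h1.rpow_const (Or.inl hbase.ne')
      (p := -(1 + α)))
    have h3 := h2.neg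
    refine h3.congr_deriv ?_
    have : -(1 + α) - 1 = -(2 + α) := by ring
    rw [this]
    field_simp
  have hcont : ContinuousOn F (Ici |θ|) :=
    fun x hx => (hd x hx).continuousAt.continuousWithinAt
  have hderiv : ∀ x ∈ Ioi |θ|, HasDerivAt F ((1+α)/τ * (1 + x / τ) ^ (-(2 + α))) x :=
    fun x hx => hd x (mem_Ici.mpr (le_of_lt hx))
  have hnonneg : ∀ x ∈ Ioi |θ|, 0 ≤ (1+α)/τ * (1 + x / τ) ^ (-(2 + α)) := by
    intro x hx
    have hxpos : 0 < x := lt_trans hθ' hx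
    positivity
  have htend : Tendsto F atTop (𝓝 0) := by
    have h1 : Tendsto (fun t : ℝ => 1 + t / τ) atTop atTop :=
      tendsto_atTop_add_const_left _ 1 (tendsto_id.atTop_div_const hτ)
    have h2 : Tendsto (fun t : ℝ => (1 + t / τ) ^ (-(1 + α))) atTop (𝓝 0) :=
      (tendsto_rpow_neg_atTop (by linarith)).comp h1
    simpa only [neg_zero] using h2.neg
  have := integral_Ioi_of_hasDerivAt_of_nonneg (hcont _ self_mem_Ici) hderiv hnonneg htend
  rw [this]
  simp [hF]
end

section
/- For every τ > 0, the normalized logarithmic prior density π(θ) = (1/(2πτ))·log(1 + τ²/θ²) on ℝ admits the scale mixture of uniforms representation π(θ) = ∫₀^∞ (1/(2t))·1{|θ| < t}·h(t) dt for all θ ≠ 0, where h(t) = (2/(πτ))·(1 + t²/τ²)^{−1} is the standard half-Cauchy density with scale τ on (0,∞). Equivalently, for all θ ≠ 0, log(1 + τ²/θ²) = ∫_{|θ|}^∞ 2τ²/(t·(t² + τ²)) dt. -/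
open MeasureTheory Set

lemma aux_integral (τ : ℝ) (hτ : 0 < τ) (a : ℝ) (ha : 0 < a) :
    ∫ t in Ioi a, 2 * τ ^ 2 / (t * (t ^ 2 + τ ^ 2)) =
      Real.log (1 + τ ^ 2 / a ^ 2) := by
  have key : ∫ t in Ioi a, 2 * τ ^ 2 / (t * (t ^ 2 + τ ^ 2)) =
      (0 : ℝ) - (2 * Real.log a - Real.log (a ^ 2 + τ ^ 2)) := by
    apply integral_Ioi_of_hasDerivAt_of_nonneg'
      (g := fun t => 2 * Real.log t - Real.log (t ^ 2 + τ ^ 2))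
    · intro x hx
      have hx0 : 0 < x := lt_of_lt_of_le ha hx
      have hq : 0 < x ^ 2 + τ ^ 2 := by positivity
      have h1 : HasDerivAt (fun t : ℝ => 2 * Real.log t) (2 * x⁻¹) x :=
        (Real.hasDerivAt_log hx0.ne').const_mul 2
      have h2 : HasDerivAt (fun t : ℝ => t ^ 2 + τ ^ 2) (2 * x) x := by
        simpa using ((hasDerivAt_pow 2 x).add_const (τ ^ 2))
      have h3 : HasDerivAt (fun t : ℝ => Real.log (t ^ 2 + τ ^ 2))
          ((x ^ 2 + τ ^ 2)⁻¹ * (2 * x)) x :=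
        (Real.hasDerivAt_log hq.ne').comp (h₂ := Real.log) x h2
      have := h1.sub h3
      refine this.congr_deriv ?_
      field_simp
      ring
    · intro x hx
      have hx0 : 0 < x := lt_trans ha hx
      positivity
    · have h0 : Filter.Tendsto (fun t : ℝ => 1 + τ ^ 2 / t ^ 2) Filter.atTop
          (nhds 1) := by
        have : Filter.Tendsto (fun t : ℝ => τ ^ 2 / t ^ 2) Filter.atTop (nhds 0) := by
          apply Filter.Tendsto.div_atTop tendsto_const_nhds
          exact Filter.tendsto_pow_atTop (by norm_num)
        simpa using (tendsto_const_nhds (x := (1:ℝ))).add this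
      have h1 : Filter.Tendsto (fun t : ℝ => -Real.log (1 + τ ^ 2 / t ^ 2))
          Filter.atTop (nhds 0) := by
        have := (Real.continuousAt_log (by norm_num : (1:ℝ) ≠ 0)).tendsto.comp h0
        simpa using this.neg
      apply h1.congr'
      filter_upwards [Filter.eventually_gt_atTop (0 : ℝ)] with t ht
      have ht2 : (0:ℝ) < t ^ 2 := by positivity
      have hq : (0:ℝ) < t ^ 2 + τ ^ 2 := by positivity
      rw [show (1 + τ ^ 2 / t ^ 2) = (t ^ 2 + τ ^ 2) / t ^ 2 by field_simp,
        Real.log_div hq.ne' ht2.ne', Real.log_pow]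
      push_cast
      ring
  rw [key]
  have ha2 : (0:ℝ) < a ^ 2 := by positivity
  have hq : (0:ℝ) < a ^ 2 + τ ^ 2 := by positivity
  rw [show (1 + τ ^ 2 / a ^ 2) = (a ^ 2 + τ ^ 2) / a ^ 2 by field_simp,
    Real.log_div hq.ne' ha2.ne', Real.log_pow]
  push_cast
  ring

/-- The normalized logarithmic prior `π(θ) = (1/(2πτ)) log(1 + τ²/θ²)` is a scale
mixture of uniforms whose mixing density is the half-Cauchy density with scale `τ`;
equivalently `log(1 + τ²/θ²) = ∫_{|θ|}^∞ 2τ²/(t(t² + τ²)) dt`. -/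
theorem logarithmic_prior_scale_mixture_of_uniforms
    (τ : ℝ) (hτ : 0 < τ) (θ : ℝ) (hθ : θ ≠ 0) :
    ((1 / (2 * Real.pi * τ)) * Real.log (1 + τ ^ 2 / θ ^ 2) =
        ∫ t in Ioi (0 : ℝ),
          (1 / (2 * t)) * (if |θ| < t then (1 : ℝ) else 0) *
            ((2 / (Real.pi * τ)) * (1 + t ^ 2 / τ ^ 2)⁻¹)) ∧
      Real.log (1 + τ ^ 2 / θ ^ 2) =
        ∫ t in Ioi |θ|, 2 * τ ^ 2 / (t * (t ^ 2 + τ ^ 2)) := by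
  have ha : 0 < |θ| := abs_pos.mpr hθ
  have haux := aux_integral τ hτ |θ| ha
  have habs : Real.log (1 + τ ^ 2 / |θ| ^ 2) = Real.log (1 + τ ^ 2 / θ ^ 2) := by
    rw [sq_abs]
  constructor
  · have hpi : Real.pi ≠ 0 := Real.pi_ne_zero
    have hindic : ∀ t : ℝ,
        (1 / (2 * t)) * (if |θ| < t then (1 : ℝ) else 0) *
            ((2 / (Real.pi * τ)) * (1 + t ^ 2 / τ ^ 2)⁻¹) =
          (Ioi |θ|).indicator
            (fun t => (1 / (2 * Real.pi * τ)) * (2 * τ ^ 2 / (t * (t ^ 2 + τ ^ 2)))) t := by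
      intro t
      by_cases h : |θ| < t
      · have ht0 : 0 < t := lt_trans ha h
        have hq : (0:ℝ) < t ^ 2 + τ ^ 2 := by positivity
        rw [indicator_of_mem (mem_Ioi.mpr h), if_pos h]
        have : (1 + t ^ 2 / τ ^ 2)⁻¹ = τ ^ 2 / (t ^ 2 + τ ^ 2) := by
          rw [show (1 + t ^ 2 / τ ^ 2) = (t ^ 2 + τ ^ 2) / τ ^ 2 by field_simp; ring]
          rw [inv_div]
        rw [this]
        field_simp
        all_goals ring
      · rw [indicator_of_notMem (by simpa using h), if_neg h]
        ring
    calc (1 / (2 * Real.pi * τ)) * Real.log (1 + τ ^ 2 / θ ^ 2)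
        = ∫ t in Ioi |θ|,
            (1 / (2 * Real.pi * τ)) * (2 * τ ^ 2 / (t * (t ^ 2 + τ ^ 2))) := by
          rw [integral_const_mul, haux, habs]
      _ = ∫ t in Ioi (0:ℝ), (Ioi |θ|).indicator
            (fun t => (1 / (2 * Real.pi * τ)) * (2 * τ ^ 2 / (t * (t ^ 2 + τ ^ 2)))) t := by
          rw [setIntegral_indicator measurableSet_Ioi,
            Ioi_inter_Ioi, max_eq_right ha.le]
      _ = _ := by
          apply setIntegral_congr_fun measurableSet_Ioi
          intro t _
          exact (hindic t).symm
  · rw [haux, habs]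
end

section
/- For every τ > 0, the function θ ↦ log(1 + τ²/θ²) is integrable on ℝ and ∫_{−∞}^{∞} log(1 + τ²/θ²) dθ = 2πτ. Consequently, the logarithmic prior π(θ) = (1/(2πτ))·log(1 + τ²/θ²) is a probability density on ℝ. -/
open MeasureTheory Set Filter Real Topology

/-- The antiderivative of `θ ↦ log(1 + τ²/θ²)` on `(0, ∞)`. -/
noncomputable def logPriorAnti (τ : ℝ) (x : ℝ) : ℝ :=
  x * (Real.log (x ^ 2 + τ ^ 2) - Real.log (x ^ 2)) + 2 * τ * Real.arctan (x / τ)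

lemma logPriorAnti_continuous (τ : ℝ) (hτ : 0 < τ) : Continuous (logPriorAnti τ) := by
  unfold logPriorAnti
  have h1 : Continuous fun x : ℝ => x * Real.log (x ^ 2 + τ ^ 2) := by
    apply continuous_id.mul
    apply Real.continuousOn_log.comp_continuous (by continuity)
    intro x
    have : 0 < x ^ 2 + τ ^ 2 := by positivity
    simpa using this.ne'
  have h2 : Continuous fun x : ℝ => x * Real.log (x ^ 2) := by
    have : (fun x : ℝ => x * Real.log (x ^ 2)) = fun x : ℝ => 2 * (x * Real.log x) := by
      funext x
      rw [Real.log_pow]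
      push_cast
      ring
    rw [this]
    exact continuous_const.mul Real.continuous_mul_log
  have h3 : Continuous fun x : ℝ => 2 * τ * Real.arctan (x / τ) := by
    exact continuous_const.mul (Real.continuous_arctan.comp (continuous_id.div_const τ))
  simpa [mul_sub, Pi.add_def, Pi.sub_def] using ((h1.sub h2).add h3)

lemma logPriorAnti_hasDerivAt (τ : ℝ) (hτ : 0 < τ) {x : ℝ} (hx : 0 < x) :
    HasDerivAt (logPriorAnti τ) (Real.log (1 + τ ^ 2 / x ^ 2)) x := by
  have hx2 : (0:ℝ) < x ^ 2 := by positivity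
  have hs : (0:ℝ) < x ^ 2 + τ ^ 2 := by positivity
  have hd1 : HasDerivAt (fun y : ℝ => y ^ 2 + τ ^ 2) (2 * x) x := by
    simpa using ((hasDerivAt_pow 2 x).add_const (τ ^ 2))
  have hd2 : HasDerivAt (fun y : ℝ => y ^ 2) (2 * x) x := by
    simpa using (hasDerivAt_pow 2 x)
  have hl1 : HasDerivAt (fun y : ℝ => Real.log (y ^ 2 + τ ^ 2)) (2 * x / (x ^ 2 + τ ^ 2)) x :=
    hd1.log hs.ne'
  have hl2 : HasDerivAt (fun y : ℝ => Real.log (y ^ 2)) (2 * x / x ^ 2) x := hd2.log hx2.ne'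
  have ha : HasDerivAt (fun y : ℝ => 2 * τ * Real.arctan (y / τ))
      (2 * τ * (1 / (1 + (x / τ) ^ 2) * (1 / τ))) x := by
    exact ((Real.hasDerivAt_arctan (x / τ)).comp x ((hasDerivAt_id x).div_const τ)).const_mul _
  have h := (((hasDerivAt_id x).mul (hl1.sub hl2)).add ha)
  have hval : 1 * (Real.log (x ^ 2 + τ ^ 2) - Real.log (x ^ 2)) +
      id x * (2 * x / (x ^ 2 + τ ^ 2) - 2 * x / x ^ 2) +
      2 * τ * (1 / (1 + (x / τ) ^ 2) * (1 / τ)) = Real.log (1 + τ ^ 2 / x ^ 2) := by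
    have hlog : Real.log (1 + τ ^ 2 / x ^ 2) =
        Real.log (x ^ 2 + τ ^ 2) - Real.log (x ^ 2) := by
      rw [show 1 + τ ^ 2 / x ^ 2 = (x ^ 2 + τ ^ 2) / x ^ 2 by field_simp,
        Real.log_div hs.ne' hx2.ne']
    rw [hlog, id]
    have h1 : x * (2 * x / (x ^ 2 + τ ^ 2) - 2 * x / x ^ 2) +
        2 * τ * (1 / (1 + (x / τ) ^ 2) * (1 / τ)) = 0 := by
      rw [show 1 + (x / τ) ^ 2 = (τ ^ 2 + x ^ 2) / τ ^ 2 by field_simp]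
      field_simp
      ring
    nlinarith [h1]
  rw [← hval]
  exact h

lemma logPriorAnti_tendsto (τ : ℝ) (hτ : 0 < τ) :
    Tendsto (logPriorAnti τ) atTop (𝓝 (Real.pi * τ)) := by
  have h1 : Tendsto (fun x : ℝ => x * (Real.log (x ^ 2 + τ ^ 2) - Real.log (x ^ 2)))
      atTop (𝓝 0) := by
    have key : Tendsto (fun x : ℝ => x⁻¹ * (x ^ 2 * Real.log (1 + τ ^ 2 / x ^ 2)))
        atTop (𝓝 (0 * τ ^ 2)) := by
      apply Tendsto.mul tendsto_inv_atTop_zero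
      have := (Real.tendsto_mul_log_one_add_div_atTop (τ ^ 2)).comp
        (tendsto_pow_atTop (two_ne_zero))
      simpa [Function.comp_def] using this
    rw [zero_mul] at key
    apply key.congr'
    filter_upwards [Ioi_mem_atTop (0:ℝ)] with x hx
    have hx : (0:ℝ) < x := hx
    have hx2 : (0:ℝ) < x ^ 2 := by positivity
    have hs : (0:ℝ) < x ^ 2 + τ ^ 2 := by positivity
    rw [show 1 + τ ^ 2 / x ^ 2 = (x ^ 2 + τ ^ 2) / x ^ 2 by field_simp,
      Real.log_div hs.ne' hx2.ne']
    field_simp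
  have h2 : Tendsto (fun x : ℝ => 2 * τ * Real.arctan (x / τ)) atTop
      (𝓝 (2 * τ * (Real.pi / 2))) := by
    apply Tendsto.const_mul
    exact (tendsto_nhds_of_tendsto_nhdsWithin Real.tendsto_arctan_atTop).comp
      (tendsto_id.atTop_div_const hτ)
  have := h1.add h2
  simp only [zero_add] at this
  convert this using 2
  · rfl
  ring

lemma log_one_add_sq_nonneg (τ θ : ℝ) : 0 ≤ Real.log (1 + τ ^ 2 / θ ^ 2) :=
  Real.log_nonneg (by nlinarith [sq_nonneg (τ / θ), div_nonneg (sq_nonneg τ) (sq_nonneg θ)])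

lemma logPrior_integrableOn_Ioi (τ : ℝ) (hτ : 0 < τ) :
    IntegrableOn (fun θ : ℝ => Real.log (1 + τ ^ 2 / θ ^ 2)) (Ioi 0) :=
  integrableOn_Ioi_deriv_of_nonneg
    ((logPriorAnti_continuous τ hτ).continuousWithinAt)
    (fun x hx => logPriorAnti_hasDerivAt τ hτ hx)
    (fun x _ => log_one_add_sq_nonneg τ x)
    (logPriorAnti_tendsto τ hτ)

lemma logPrior_integral_Ioi (τ : ℝ) (hτ : 0 < τ) :
    ∫ θ in Ioi (0:ℝ), Real.log (1 + τ ^ 2 / θ ^ 2) = Real.pi * τ := by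
  have := integral_Ioi_of_hasDerivAt_of_nonneg
    ((logPriorAnti_continuous τ hτ).continuousWithinAt)
    (fun x hx => logPriorAnti_hasDerivAt τ hτ hx)
    (fun x _ => log_one_add_sq_nonneg τ x)
    (logPriorAnti_tendsto τ hτ)
  simpa [logPriorAnti] using this

/-- The function `θ ↦ log(1 + τ²/θ²)` is integrable on `ℝ` with total integral `2πτ`;
consequently the logarithmic prior `π(θ) = (1/(2πτ)) log(1 + τ²/θ²)` is a probability
density on `ℝ`. -/
theorem logarithmic_prior_is_probability_density (τ : ℝ) (hτ : 0 < τ) :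
    Integrable (fun θ : ℝ => Real.log (1 + τ ^ 2 / θ ^ 2)) ∧
      (∫ θ : ℝ, Real.log (1 + τ ^ 2 / θ ^ 2)) = 2 * Real.pi * τ ∧
      (∀ θ : ℝ, 0 ≤ (1 / (2 * Real.pi * τ)) * Real.log (1 + τ ^ 2 / θ ^ 2)) ∧
      (∫ θ : ℝ, (1 / (2 * Real.pi * τ)) * Real.log (1 + τ ^ 2 / θ ^ 2)) = 1 := by
  set f : ℝ → ℝ := fun θ => Real.log (1 + τ ^ 2 / θ ^ 2) with hf
  have habs : ∀ θ : ℝ, f |θ| = f θ := by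
    intro θ; simp [hf, sq_abs]
  have hInt : Integrable f := by
    have hIoi := logPrior_integrableOn_Ioi τ hτ
    have hIic : IntegrableOn f (Iic 0) := by
      have m : MeasurableEmbedding fun x : ℝ => -x :=
        (Homeomorph.neg ℝ).measurableEmbedding
      have : IntegrableOn (fun x => f (-x)) (Iic 0) := by
        rw [show (volume : Measure ℝ) = Measure.map (fun x : ℝ => -x) volume from
          (Measure.map_neg_eq_self (volume : Measure ℝ)).symm] 
        rw [m.integrableOn_map_iff]
        simp only [Function.comp_def, neg_neg, neg_preimage, neg_Iic, neg_zero]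
        exact (integrableOn_Ici_iff_integrableOn_Ioi).mpr hIoi
      apply this.congr_fun _ measurableSet_Iic
      intro x _
      simp [hf, neg_pow]
    have : IntegrableOn f (Iic 0 ∪ Ioi 0) := hIic.union hIoi
    rwa [Iic_union_Ioi, integrableOn_univ] at this
  have hIntegral : (∫ θ : ℝ, f θ) = 2 * Real.pi * τ := by
    have h1 : (∫ θ : ℝ, f θ) = ∫ θ : ℝ, f |θ| := by
      congr 1; funext θ; rw [habs]
    rw [h1, integral_comp_abs, logPrior_integral_Ioi τ hτ]
    ring
  have hπτ : (2 * Real.pi * τ) ≠ 0 := by positivity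
  refine ⟨hInt, hIntegral, fun θ => ?_, ?_⟩
  · have := log_one_add_sq_nonneg τ θ
    positivity
  · rw [integral_const_mul, hIntegral, one_div, inv_mul_cancel₀ hπτ]
end
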